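/- Let σ_x = [[0,1],[1,0]], σ_z = [[1,0],[0,−1]], σ_+ = [[0,1],[0,0]], σ_− = [[0,0],[1,0]]. Consider the solution ρ : ℝ → M_2(ℂ) of the master equation dρ/dt = ½(σ_x ρ σ_x − ρ) + sin(t)(σ_− ρ σ_+ − ½(σ_+σ_− ρ + ρ σ_+σ_−)) with initial condition ρ(0) = ½·I. Then ρ(2π) = ½(I − κ σ_z) with κ = e^{1−2π} ∫_0^{2π} sin(s) e^{s − cos(s)} ds, and |κ| > 1; consequently ρ(2π) is not positive semidefinite, so the dynamics generated by the sum of these two generators is not physical. -/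

import Mathlib

open Matrix
open scoped ComplexOrder

attribute [local instance] Matrix.normedAddCommGroup Matrix.normedSpace

noncomputable def sigmaX : Matrix (Fin 2) (Fin 2) ℂ := !![0, 1; 1, 0]
noncomputable def sigmaZ : Matrix (Fin 2) (Fin 2) ℂ := !![1, 0; 0, -1]
noncomputable def sigmaP : Matrix (Fin 2) (Fin 2) ℂ := !![0, 1; 0, 0]
noncomputable def sigmaM : Matrix (Fin 2) (Fin 2) ℂ := !![0, 0; 1, 0]

/-- The constant `κ = e^{1-2π} ∫_0^{2π} sin(s) e^{s - cos(s)} ds`. -/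
noncomputable def kappa14 : ℝ :=
  Real.exp (1 - 2 * Real.pi) *
    ∫ s in (0:ℝ)..(2 * Real.pi), Real.sin s * Real.exp (s - Real.cos s)

namespace Stmt14Aux

/-! ### Scalar ODE uniqueness -/

lemma zero_of_ode {f : ℝ → ℂ} {g : ℝ → ℂ} (hK : ∀ t, ‖g t‖ ≤ 2)
    (hf : ∀ t, HasDerivAt f (g t * f t) t) (h0 : f 0 = 0) {b : ℝ} (hb : 0 ≤ b) :
    f b = 0 := by
  have hv : ∀ t, LipschitzWith 2 (fun x : ℂ => g t * x) := by
    intro t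
    apply LipschitzWith.of_dist_le_mul
    intro x y
    rw [dist_eq_norm, dist_eq_norm, ← mul_sub, norm_mul]
    have h2 : ((2 : NNReal) : ℝ) = 2 := by norm_num
    rw [h2]
    exact mul_le_mul_of_nonneg_right (hK t) (norm_nonneg _)
  have key := ODE_solution_unique (v := fun t x => g t * x) hv
    (f := f) (g := fun _ => 0) (a := 0) (b := b)
    (fun t _ => (hf t).continuousAt.continuousWithinAt)
    (fun t _ => (hf t).hasDerivWithinAt)
    continuousOn_const
    (fun t _ => by simpa using (hasDerivWithinAt_const t _ (0:ℂ)))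
    (by simpa using h0)
  simpa using key (Set.mem_Icc.2 ⟨hb, le_refl b⟩)

/-! ### Polynomial derivative helper -/

lemma poly_deriv6 (a0 a1 a2 a3 a4 a5 : ℝ) (x : ℝ) :
    HasDerivAt (fun x : ℝ => a0 + a1*x + a2*x^2 + a3*x^3 + a4*x^4 + a5*x^5)
      (a1 + 2*a2*x + 3*a3*x^2 + 4*a4*x^3 + 5*a5*x^4) x := by
  have h : ∀ (k : ℕ) (a : ℝ), HasDerivAt (fun x : ℝ => a * x ^ k) (a * (k * x ^ (k-1))) x :=
    fun k a => (hasDerivAt_pow k x).const_mul a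
  have this : HasDerivAt (F := ℝ) _ _ x := (((((hasDerivAt_const x a0).add (h 1 a1)).add (h 2 a2)).add (h 3 a3)).add
    (h 4 a4)).add (h 5 a5)
  convert this using 1
  · funext y; simp only [Pi.add_apply]; ring
  · norm_num; ring

/-! ### Lower bound for the exponential by its degree-5 Taylor polynomial -/

lemma helperA {f f' : ℝ → ℝ} (hd : ∀ x, HasDerivAt f (f' x) x) (h0 : f 0 = 0)
    (hp : ∀ x, 0 ≤ x → 0 ≤ f' x) (hn : ∀ x, x ≤ 0 → f' x ≤ 0) : ∀ x, 0 ≤ f x := by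
  intro x
  rcases le_total 0 x with hx | hx
  · have hm : MonotoneOn f (Set.Ici 0) :=
      monotoneOn_of_hasDerivWithinAt_nonneg (convex_Ici 0)
        (fun y _ => (hd y).continuousAt.continuousWithinAt)
        (fun y hy => (hd y).hasDerivWithinAt)
        (fun y hy => hp y (le_of_lt (by simpa [interior_Ici] using hy)))
    have := hm Set.self_mem_Ici (Set.mem_Ici.2 hx) hx
    linarith [h0 ▸ this]
  · have hm : AntitoneOn f (Set.Iic 0) :=
      antitoneOn_of_hasDerivWithinAt_nonpos (convex_Iic 0)
        (fun y _ => (hd y).continuousAt.continuousWithinAt)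
        (fun y hy => (hd y).hasDerivWithinAt)
        (fun y hy => hn y (le_of_lt (by simpa [interior_Iic] using hy)))
    have := hm (Set.mem_Iic.2 hx) Set.self_mem_Iic hx
    linarith [h0 ▸ this]

lemma exp_lb (x : ℝ) : 1 + x + x^2/2 + x^3/6 + x^4/24 + x^5/120 ≤ Real.exp x := by
  have hd2 : ∀ x : ℝ, HasDerivAt (fun x : ℝ => Real.exp x - (1 + x + x^2/2))
      (Real.exp x - (1 + x)) x := by
    intro x
    have this : HasDerivAt (F := ℝ) _ _ x := (Real.hasDerivAt_exp x).sub
      ((hasDerivAt_const x (1:ℝ)).add (poly_deriv6 0 1 (1/2) 0 0 0 x))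
    convert this using 1 <;> [skip; ring]
    funext y; simp only [Pi.add_apply, Pi.sub_apply]; ring
  have hm2 : Monotone (fun x : ℝ => Real.exp x - (1 + x + x^2/2)) :=
    monotone_of_hasDerivAt_nonneg hd2 (fun x => by have := Real.add_one_le_exp x; simp; linarith)
  have h2p : ∀ x : ℝ, 0 ≤ x → 0 ≤ Real.exp x - (1 + x + x^2/2) := by
    intro x hx; have := hm2 hx; simp at this; linarith [this]
  have h2n : ∀ x : ℝ, x ≤ 0 → Real.exp x - (1 + x + x^2/2) ≤ 0 := by
    intro x hx; have := hm2 hx; simp at this; linarith [this]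
  have hd3 : ∀ x : ℝ, HasDerivAt (fun x : ℝ => Real.exp x - (1 + x + x^2/2 + x^3/6))
      (Real.exp x - (1 + x + x^2/2)) x := by
    intro x
    have this : HasDerivAt (F := ℝ) _ _ x := (Real.hasDerivAt_exp x).sub
      ((hasDerivAt_const x (1:ℝ)).add (poly_deriv6 0 1 (1/2) (1/6) 0 0 x))
    convert this using 1 <;> [skip; ring]
    funext y; simp only [Pi.add_apply, Pi.sub_apply]; ring
  have h3 : ∀ x : ℝ, 0 ≤ Real.exp x - (1 + x + x^2/2 + x^3/6) :=
    helperA hd3 (by norm_num) h2p h2n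
  have hd4 : ∀ x : ℝ, HasDerivAt (fun x : ℝ => Real.exp x - (1 + x + x^2/2 + x^3/6 + x^4/24))
      (Real.exp x - (1 + x + x^2/2 + x^3/6)) x := by
    intro x
    have this : HasDerivAt (F := ℝ) _ _ x := (Real.hasDerivAt_exp x).sub
      ((hasDerivAt_const x (1:ℝ)).add (poly_deriv6 0 1 (1/2) (1/6) (1/24) 0 x))
    convert this using 1 <;> [skip; ring]
    funext y; simp only [Pi.add_apply, Pi.sub_apply]; ring
  have hm4 : Monotone (fun x : ℝ => Real.exp x - (1 + x + x^2/2 + x^3/6 + x^4/24)) :=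
    monotone_of_hasDerivAt_nonneg hd4 (fun x => h3 x)
  have h4p : ∀ x : ℝ, 0 ≤ x → 0 ≤ Real.exp x - (1 + x + x^2/2 + x^3/6 + x^4/24) := by
    intro x hx; have := hm4 hx; simp at this; linarith [this]
  have h4n : ∀ x : ℝ, x ≤ 0 → Real.exp x - (1 + x + x^2/2 + x^3/6 + x^4/24) ≤ 0 := by
    intro x hx; have := hm4 hx; simp at this; linarith [this]
  have hd5 : ∀ x : ℝ, HasDerivAt
      (fun x : ℝ => Real.exp x - (1 + x + x^2/2 + x^3/6 + x^4/24 + x^5/120))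
      (Real.exp x - (1 + x + x^2/2 + x^3/6 + x^4/24)) x := by
    intro x
    have this : HasDerivAt (F := ℝ) _ _ x := (Real.hasDerivAt_exp x).sub
      ((hasDerivAt_const x (1:ℝ)).add (poly_deriv6 0 1 (1/2) (1/6) (1/24) (1/120) x))
    convert this using 1 <;> [skip; ring]
    funext y; simp only [Pi.add_apply, Pi.sub_apply]; ring
  have h5 : ∀ x : ℝ, 0 ≤ Real.exp x - (1 + x + x^2/2 + x^3/6 + x^4/24 + x^5/120) :=
    helperA hd5 (by norm_num) h4p h4n
  linarith [h5 x]

/-! ### The explicit diagonal solution -/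

noncomputable def phi (s : ℝ) : ℝ := Real.exp (s - Real.cos s)

lemma phi_cont : Continuous phi :=
  Real.continuous_exp.comp (continuous_id.sub Real.continuous_cos)

lemma phi_deriv (s : ℝ) : HasDerivAt phi ((1 + Real.sin s) * phi s) s := by
  have h : HasDerivAt (F := ℝ) _ _ s := ((hasDerivAt_id s).sub (Real.hasDerivAt_cos s)).exp
  convert h using 1
  · rfl
  simp [phi]; ring

noncomputable def Asol (t : ℝ) : ℝ :=
  Real.exp (Real.cos t - t) * (Real.exp (-1) / 2 + (∫ s in (0:ℝ)..t, phi s) / 2)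

lemma Asol_deriv (t : ℝ) : HasDerivAt Asol (1/2 - (1 + Real.sin t) * Asol t) t := by
  have hI : HasDerivAt (fun t => ∫ s in (0:ℝ)..t, phi s) (phi t) t :=
    intervalIntegral.integral_hasDerivAt_right (phi_cont.intervalIntegrable _ _)
      (phi_cont.aestronglyMeasurable.stronglyMeasurableAtFilter) phi_cont.continuousAt
  have hB : HasDerivAt (fun t => Real.exp (-1) / 2 + (∫ s in (0:ℝ)..t, phi s) / 2)
      (phi t / 2) t := by
    exact ((hasDerivAt_const t (Real.exp (-1)/2)).add (hI.div_const 2)).congr_deriv (by simp)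
  have hE : HasDerivAt (fun t => Real.exp (Real.cos t - t))
      (Real.exp (Real.cos t - t) * (-Real.sin t - 1)) t := by
    have := ((Real.hasDerivAt_cos t).sub (hasDerivAt_id t)).exp
    simpa using this
  have this : HasDerivAt (F := ℝ) _ _ t := hE.mul hB
  convert this using 1
  · rfl
  have hcan : Real.exp (Real.cos t - t) * phi t = 1 := by
    rw [phi, ← Real.exp_add]; norm_num
  unfold Asol
  nlinarith [hcan]

lemma Asol_zero : Asol 0 = 1/2 := by
  simp only [Asol, Real.cos_zero, intervalIntegral.integral_same]
  have h : Real.exp (1-(0:ℝ)) * Real.exp (-1) = 1 := by rw [← Real.exp_add]; norm_num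
  linear_combination h / 2

/-! ### The polynomial comparison integrand and its antiderivative -/

noncomputable def Gfun (s : ℝ) : ℝ :=
  Real.exp s * ((103/85 - 287/520*Real.cos s + 9/85*Real.cos s^2 - 9/520*Real.cos s^3
    + 1/408*Real.cos s^4 - 1/3120*Real.cos s^5)
    + Real.sin s * (-287/520 + 18/85*Real.cos s - 27/520*Real.cos s^2 + 1/102*Real.cos s^3
      - 1/624*Real.cos s^4))

noncomputable def psi (s : ℝ) : ℝ :=
  Real.exp s * (1 - Real.cos s + Real.cos s^2/2 - Real.cos s^3/6 + Real.cos s^4/24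
    - Real.cos s^5/120)

lemma Gfun_deriv (s : ℝ) : HasDerivAt Gfun (psi s) s := by
  have hc := Real.hasDerivAt_cos s
  have hs := Real.hasDerivAt_sin s
  have hP : HasDerivAt (fun s : ℝ => 103/85 - 287/520*Real.cos s + 9/85*Real.cos s^2
      - 9/520*Real.cos s^3 + 1/408*Real.cos s^4 - 1/3120*Real.cos s^5)
      ((-287/520 + 2*(9/85)*Real.cos s + 3*(-9/520)*Real.cos s^2 + 4*(1/408)*Real.cos s^3
        + 5*(-1/3120)*Real.cos s^4) * (-Real.sin s)) s := by
    have this : HasDerivAt (F := ℝ) _ _ s := HasDerivAt.comp s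
      (poly_deriv6 (103/85) (-287/520) (9/85) (-9/520) (1/408) (-1/3120) (Real.cos s)) hc
    convert this using 2
    simp only [Function.comp_apply]; ring
  have hR : HasDerivAt (fun s : ℝ => -287/520 + 18/85*Real.cos s - 27/520*Real.cos s^2
      + 1/102*Real.cos s^3 - 1/624*Real.cos s^4)
      ((18/85 + 2*(-27/520)*Real.cos s + 3*(1/102)*Real.cos s^2 + 4*(-1/624)*Real.cos s^3)
        * (-Real.sin s)) s := by
    have this : HasDerivAt (F := ℝ) _ _ s := HasDerivAt.comp s
      (poly_deriv6 (-287/520) (18/85) (-27/520) (1/102) (-1/624) 0 (Real.cos s)) hc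
    convert this using 2
    · simp only [Function.comp_apply]; ring
    · ring
  have hall : HasDerivAt (F := ℝ) _ _ s := (Real.hasDerivAt_exp s).mul (hP.add (hs.mul hR))
  convert hall using 1
  · rfl
  have hsq : Real.sin s ^ 2 = 1 - Real.cos s ^ 2 := Real.sin_sq s
  unfold psi
  simp only [Pi.add_apply, Pi.mul_apply]
  linear_combination (Real.exp s *
    (18/85 - (27/260)*Real.cos s + (1/34)*Real.cos s^2 - (1/156)*Real.cos s^3)) * hsq

lemma psi_cont : Continuous psi := by unfold psi; fun_prop

lemma J_val : (∫ s in (0:ℝ)..(2*Real.pi), psi s)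
    = (Real.exp (2*Real.pi) - 1) * (39809/53040) := by
  rw [intervalIntegral.integral_eq_sub_of_hasDerivAt (fun s _ => Gfun_deriv s)
    (psi_cont.intervalIntegrable _ _)]
  unfold Gfun
  rw [Real.cos_two_pi, Real.sin_two_pi]
  simp
  ring

lemma psi_le_phi (s : ℝ) : psi s ≤ phi s := by
  have h := exp_lb (-Real.cos s)
  have hpos : (0:ℝ) < Real.exp s := Real.exp_pos s
  have hsplit : phi s = Real.exp s * Real.exp (-Real.cos s) := by
    rw [phi, ← Real.exp_add]; ring_nf
  rw [hsplit, psi]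
  have := mul_le_mul_of_nonneg_left h (le_of_lt hpos)
  calc Real.exp s * (1 - Real.cos s + Real.cos s^2/2 - Real.cos s^3/6 + Real.cos s^4/24
      - Real.cos s^5/120)
      = Real.exp s * (1 + (-Real.cos s) + (-Real.cos s)^2/2 + (-Real.cos s)^3/6
        + (-Real.cos s)^4/24 + (-Real.cos s)^5/120) := by ring
    _ ≤ Real.exp s * Real.exp (-Real.cos s) := this

/-! ### Value of the solution and of κ at `2π` -/

lemma two_pi_pos : (0:ℝ) < 2 * Real.pi := by positivity

lemma Iphi_ge : (Real.exp (2*Real.pi) - 1) * (39809/53040)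
    ≤ ∫ s in (0:ℝ)..(2*Real.pi), phi s := by
  rw [← J_val]
  apply intervalIntegral.integral_mono_on (le_of_lt two_pi_pos)
    (psi_cont.intervalIntegrable _ _) (phi_cont.intervalIntegrable _ _)
  intro s _
  exact psi_le_phi s

lemma kappa_eq : 1 - kappa14 = 2 * Asol (2*Real.pi) := by
  have hFTC : (∫ s in (0:ℝ)..(2*Real.pi), (1 + Real.sin s) * phi s)
      = Real.exp (2*Real.pi - 1) - Real.exp (-1) := by
    rw [intervalIntegral.integral_eq_sub_of_hasDerivAt (fun s _ => phi_deriv s)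
      (((continuous_const.add Real.continuous_sin).mul phi_cont).intervalIntegrable _ _)]
    rw [phi, phi, Real.cos_two_pi, Real.cos_zero]
    norm_num
  have hsplit : (∫ s in (0:ℝ)..(2*Real.pi), Real.sin s * Real.exp (s - Real.cos s))
      = (∫ s in (0:ℝ)..(2*Real.pi), (1 + Real.sin s) * phi s)
        - ∫ s in (0:ℝ)..(2*Real.pi), phi s := by
    rw [← intervalIntegral.integral_sub (f := fun s => (1 + Real.sin s) * phi s)
      (((continuous_const.add Real.continuous_sin).mul phi_cont).intervalIntegrable _ _)
      (phi_cont.intervalIntegrable _ _)]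
    congr 1
    funext s
    simp [phi]; ring
  have hexp1 : Real.exp (1 - 2*Real.pi) * Real.exp (2*Real.pi - 1) = 1 := by
    rw [← Real.exp_add]; norm_num
  rw [kappa14, hsplit, hFTC]
  unfold Asol
  rw [Real.cos_two_pi]
  linear_combination -hexp1

lemma exp_bounds : (396:ℝ) < Real.exp (2*Real.pi) := by
  have h6 : (6:ℝ) ≤ 2 * Real.pi := by
    have := Real.pi_gt_three; linarith
  have h1 : Real.exp 6 ≤ Real.exp (2*Real.pi) := Real.exp_le_exp.2 h6
  have he : (2.7182818283:ℝ) < Real.exp 1 := Real.exp_one_gt_d9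
  have h2 : ((2.7182818283:ℝ))^6 < (Real.exp 1)^6 := by
    apply pow_lt_pow_left₀ he (by norm_num)
    norm_num
  have h3 : (Real.exp 1)^6 = Real.exp 6 := by
    rw [← Real.exp_nat_mul]; norm_num
  nlinarith [h2]

lemma kappa_lt : kappa14 < -1 := by
  have hkeq := kappa_eq
  -- suffices: Asol (2π) > 1
  have hIJ := Iphi_ge
  set I := ∫ s in (0:ℝ)..(2*Real.pi), phi s with hI
  have hA : Asol (2*Real.pi) = Real.exp (1 - 2*Real.pi) * (Real.exp (-1)/2 + I/2) := by
    unfold Asol; rw [Real.cos_two_pi]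
  -- abbreviations
  set y := Real.exp (-(2*Real.pi)) with hy
  have hy_pos : 0 < y := Real.exp_pos _
  have hy_inv : y * Real.exp (2*Real.pi) = 1 := by
    rw [hy, ← Real.exp_add]; norm_num
  have hy_le : y < 1/396 := by
    rw [lt_div_iff₀ (by norm_num : (0:ℝ) < 396)]
    nlinarith [mul_lt_mul_of_pos_left exp_bounds hy_pos, hy_inv]
  have he_lo : (2.7182818283:ℝ) < Real.exp 1 := Real.exp_one_gt_d9
  have he_hi : Real.exp 1 < 2.7182818286 := Real.exp_one_lt_d9
  have hsp1 : Real.exp (1 - 2*Real.pi) = Real.exp 1 * y := by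
    rw [hy, ← Real.exp_add]; ring_nf
  have hsp2 : Real.exp 1 * Real.exp (-1) = 1 := by
    rw [← Real.exp_add]; norm_num
  -- Asol (2π) ≥ (y + e·(1-y)·q)/2  where q = 39809/53040
  have hq : (0:ℝ) < 39809/53040 := by norm_num
  have hA_ge : Asol (2*Real.pi)
      ≥ (y + Real.exp 1 * (1 - y) * (39809/53040)) / 2 := by
    rw [hA, hsp1]
    have hIJ' : (Real.exp (2*Real.pi) - 1) * (39809/53040) ≤ I := hIJ
    have hE : Real.exp 1 * y * ((Real.exp (2*Real.pi) - 1) * (39809/53040))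
        = Real.exp 1 * (1 - y) * (39809/53040) := by
      have : y * Real.exp (2*Real.pi) = 1 := hy_inv
      nlinarith [this]
    nlinarith [mul_le_mul_of_nonneg_left hIJ'
        (by positivity : (0:ℝ) ≤ Real.exp 1 * y), hsp2, hy_pos, he_lo]
  have hfin : 1 < Asol (2*Real.pi) := by
    have : (2:ℝ) < y + Real.exp 1 * (1 - y) * (39809/53040) := by
      nlinarith [hy_pos, hy_le, he_lo, he_hi]
    linarith [hA_ge]
  linarith [hkeq]

end Stmt14Aux

open Stmt14Aux

/-- Second counterexample of the paper: the solution of the master equation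
obtained by adding the dephasing generator with constant rate `½` and the
amplitude-damping generator with rate `sin t`, started from the maximally
mixed state, reaches at `t = 2π` the matrix `½(1 - κ σ_z)` with `|κ| > 1`,
which is not positive semidefinite — so the summed dynamics is unphysical. -/
theorem stmt_14 (ρ : ℝ → Matrix (Fin 2) (Fin 2) ℂ)
    (hρ0 : ρ 0 = (2:ℂ)⁻¹ • (1 : Matrix (Fin 2) (Fin 2) ℂ))
    (hode : ∀ t : ℝ, HasDerivAt ρ
      ((2:ℂ)⁻¹ • (sigmaX * ρ t * sigmaX - ρ t) +
        ((Real.sin t : ℂ)) • (sigmaM * ρ t * sigmaP -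
          (2:ℂ)⁻¹ • (sigmaP * sigmaM * ρ t + ρ t * (sigmaP * sigmaM)))) t) :
    ρ (2 * Real.pi) = (2:ℂ)⁻¹ •
        ((1 : Matrix (Fin 2) (Fin 2) ℂ) - (kappa14 : ℂ) • sigmaZ) ∧
    1 < |kappa14| ∧
    ¬ (ρ (2 * Real.pi)).PosSemidef := by
  -- the generator in explicit matrix form
  have hM : ∀ (M : Matrix (Fin 2) (Fin 2) ℂ) (st : ℂ),
      (2:ℂ)⁻¹ • (sigmaX * M * sigmaX - M) + st • (sigmaM * M * sigmaP -
        (2:ℂ)⁻¹ • (sigmaP * sigmaM * M + M * (sigmaP * sigmaM))) =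
      !![2⁻¹*(M 1 1 - M 0 0) - st * M 0 0, 2⁻¹*(M 1 0 - M 0 1) - st/2 * M 0 1;
         2⁻¹*(M 0 1 - M 1 0) - st/2 * M 1 0, 2⁻¹*(M 0 0 - M 1 1) + st * M 0 0] := by
    intro M st
    ext i j
    fin_cases i <;> fin_cases j <;>
      simp [sigmaX, sigmaP, sigmaM, Matrix.mul_apply, Matrix.vecMul, dotProduct,
        Fin.sum_univ_two] <;> ring
  -- entrywise derivatives
  have h00 : ∀ t, HasDerivAt (fun t => ρ t 0 0)
      (2⁻¹*(ρ t 1 1 - ρ t 0 0) - (Real.sin t : ℂ) * ρ t 0 0) t := by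
    intro t
    have h := hode t; rw [hM] at h
    have := (hasDerivAt_pi.1 ((hasDerivAt_pi.1 h) 0)) 0
    simpa using this
  have h01 : ∀ t, HasDerivAt (fun t => ρ t 0 1)
      (2⁻¹*(ρ t 1 0 - ρ t 0 1) - (Real.sin t : ℂ)/2 * ρ t 0 1) t := by
    intro t
    have h := hode t; rw [hM] at h
    have := (hasDerivAt_pi.1 ((hasDerivAt_pi.1 h) 0)) 1
    simpa using this
  have h10 : ∀ t, HasDerivAt (fun t => ρ t 1 0)
      (2⁻¹*(ρ t 0 1 - ρ t 1 0) - (Real.sin t : ℂ)/2 * ρ t 1 0) t := by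
    intro t
    have h := hode t; rw [hM] at h
    have := (hasDerivAt_pi.1 ((hasDerivAt_pi.1 h) 1)) 0
    simpa using this
  have h11 : ∀ t, HasDerivAt (fun t => ρ t 1 1)
      (2⁻¹*(ρ t 0 0 - ρ t 1 1) + (Real.sin t : ℂ) * ρ t 0 0) t := by
    intro t
    have h := hode t; rw [hM] at h
    have := (hasDerivAt_pi.1 ((hasDerivAt_pi.1 h) 1)) 1
    simpa using this
  -- initial values
  have init00 : ρ 0 0 0 = 2⁻¹ := by rw [hρ0]; simp [Matrix.one_apply]
  have init11 : ρ 0 1 1 = 2⁻¹ := by rw [hρ0]; simp [Matrix.one_apply]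
  have init01 : ρ 0 0 1 = 0 := by rw [hρ0]; simp [Matrix.one_apply]
  have init10 : ρ 0 1 0 = 0 := by rw [hρ0]; simp [Matrix.one_apply]
  -- sin bound as complex norm
  have hsin_norm : ∀ t : ℝ, ‖((Real.sin t : ℝ) : ℂ)‖ ≤ 1 := by
    intro t
    rw [Complex.norm_real]
    exact abs_le.2 ⟨Real.neg_one_le_sin t, Real.sin_le_one t⟩
  -- trace is constant
  have htr : ∀ t, ρ t 0 0 + ρ t 1 1 = 1 := by
    have hct : ∀ x y : ℝ, (fun t => ρ t 0 0 + ρ t 1 1) x = (fun t => ρ t 0 0 + ρ t 1 1) y := by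
      apply is_const_of_deriv_eq_zero
      · intro t
        exact ((h00 t).add (h11 t)).differentiableAt
      · intro t
        have hd : HasDerivAt (fun t => ρ t 0 0 + ρ t 1 1) 0 t := by
          have this : HasDerivAt (F := ℂ) _ _ t := (h00 t).add (h11 t)
          convert this using 1
          · rfl
          ring
        exact hd.deriv
    intro t
    have := hct t 0
    simp only at this
    rw [this, init00, init11]
    norm_num
  -- off-diagonal sum is zero
  have hu : ∀ t : ℝ, 0 ≤ t → ρ t 0 1 + ρ t 1 0 = 0 := by
    intro t ht
    refine zero_of_ode (f := fun t => ρ t 0 1 + ρ t 1 0) (g := fun t => -(Real.sin t : ℂ)/2) ?_ ?_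
      (by show ρ (0:ℝ) 0 1 + ρ 0 1 0 = 0; rw [init01, init10]; ring) ht
    · intro s
      calc ‖(-(Real.sin s : ℂ)/2)‖ = ‖((Real.sin s : ℝ) : ℂ)‖/2 := by
            rw [norm_div, norm_neg]; norm_num
        _ ≤ 2 := by linarith [hsin_norm s]
    · intro s
      have this : HasDerivAt (F := ℂ) _ _ s := (h01 s).add (h10 s)
      convert this using 1
      · rfl
      ring
  have hv : ∀ t : ℝ, 0 ≤ t → ρ t 0 1 - ρ t 1 0 = 0 := by
    intro t ht
    refine zero_of_ode (f := fun t => ρ t 0 1 - ρ t 1 0) (g := fun t => -1 - (Real.sin t : ℂ)/2) ?_ ?_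
      (by show ρ (0:ℝ) 0 1 - ρ 0 1 0 = 0; rw [init01, init10]; ring) ht
    · intro s
      have h2 : ‖((Real.sin s : ℝ) : ℂ)/2‖ ≤ 1/2 := by
        rw [norm_div]
        have := hsin_norm s
        have h2n : ‖(2:ℂ)‖ = 2 := by norm_num
        rw [h2n]
        linarith
      calc ‖(-1 - (Real.sin s : ℂ)/2)‖ ≤ ‖(-1 : ℂ)‖ + ‖((Real.sin s : ℝ) : ℂ)/2‖ :=
            norm_sub_le _ _
        _ ≤ 2 := by rw [norm_neg, norm_one]; linarith
    · intro s
      have this : HasDerivAt (F := ℂ) _ _ s := (h01 s).sub (h10 s)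
      convert this using 1
      · rfl
      ring
  -- diagonal entry coincides with the explicit solution
  have ha : ∀ t : ℝ, 0 ≤ t → ρ t 0 0 = ((Asol t : ℝ) : ℂ) := by
    intro t ht
    have hAc : ∀ s : ℝ, HasDerivAt (fun s => ((Asol s : ℝ) : ℂ))
        ((1:ℂ)/2 - (1 + (Real.sin s : ℂ)) * ((Asol s : ℝ) : ℂ)) s := by
      intro s
      have := (Asol_deriv s).ofReal_comp
      convert this using 1
      push_cast
      ring
    have hdiff : ρ t 0 0 - ((Asol t : ℝ) : ℂ) = 0 := by
      refine zero_of_ode (f := fun s => ρ s 0 0 - ((Asol s : ℝ) : ℂ)) (g := fun s => -(1 + (Real.sin s : ℂ))) ?_ ?_ ?_ ht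
      · intro s
        calc ‖(-(1 + (Real.sin s : ℂ)))‖ ≤ ‖(1:ℂ)‖ + ‖((Real.sin s : ℝ) : ℂ)‖ := by
              rw [norm_neg]; exact norm_add_le _ _
          _ ≤ 2 := by
              have := hsin_norm s
              rw [norm_one]
              linarith
      · intro s
        have hd1 : HasDerivAt (fun s => ρ s 0 0)
            ((1:ℂ)/2 - (1 + (Real.sin s : ℂ)) * ρ s 0 0) s := by
          have := h00 s
          convert this using 1
          have h11s : ρ s 1 1 = 1 - ρ s 0 0 := by
            linear_combination htr s
          rw [h11s]; ring
        have this : HasDerivAt (F := ℂ) _ _ s := hd1.sub (hAc s)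
        convert this using 1
        · rfl
        ring
      · show ρ (0:ℝ) 0 0 - ((Asol 0 : ℝ) : ℂ) = 0
        rw [init00, Asol_zero]
        push_cast
        ring
    linear_combination hdiff
  -- assemble
  have ht2 : (0:ℝ) ≤ 2 * Real.pi := le_of_lt two_pi_pos
  have hb0 : ρ (2*Real.pi) 0 1 = 0 := by
    have h1 := hu _ ht2
    have h2 := hv _ ht2
    linear_combination (h1 + h2) / 2
  have hc0 : ρ (2*Real.pi) 1 0 = 0 := by
    have h1 := hu _ ht2
    have h2 := hv _ ht2
    linear_combination (h1 - h2) / 2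
  have ha2 : ρ (2*Real.pi) 0 0 = ((Asol (2*Real.pi) : ℝ) : ℂ) := ha _ ht2
  have hd2 : ρ (2*Real.pi) 1 1 = 1 - ((Asol (2*Real.pi) : ℝ) : ℂ) := by
    have := htr (2*Real.pi)
    rw [ha2] at this
    linear_combination this
  have hkC : (1:ℂ) - (kappa14 : ℂ) = 2 * ((Asol (2*Real.pi) : ℝ) : ℂ) := by
    have := kappa_eq
    exact_mod_cast congrArg (fun r : ℝ => (r : ℂ)) this
  have hRHS : (2:ℂ)⁻¹ • ((1 : Matrix (Fin 2) (Fin 2) ℂ) - (kappa14 : ℂ) • sigmaZ)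
      = !![2⁻¹ * (1 - (kappa14:ℂ)), 0; 0, 2⁻¹ * (1 + (kappa14:ℂ))] := by
    ext i j
    fin_cases i <;> fin_cases j <;> simp [sigmaZ, Matrix.one_apply] <;> ring
  have heq : ρ (2 * Real.pi) = (2:ℂ)⁻¹ •
      ((1 : Matrix (Fin 2) (Fin 2) ℂ) - (kappa14 : ℂ) • sigmaZ) := by
    have e1 : ((Asol (2*Real.pi) : ℝ) : ℂ) = 2⁻¹ * (1 - (kappa14:ℂ)) := by
      linear_combination (-(1:ℂ)/2) * hkC
    have e2 : (1:ℂ) - ((Asol (2*Real.pi) : ℝ) : ℂ) = 2⁻¹ * (1 + (kappa14:ℂ)) := by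
      linear_combination ((1:ℂ)/2) * hkC
    rw [Matrix.eta_fin_two (ρ (2*Real.pi)), ha2, hb0, hc0, hd2, hRHS, e2, e1]
  have hklt := kappa_lt
  refine ⟨heq, ?_, ?_⟩
  · rw [abs_of_neg (by linarith : kappa14 < 0)]
    linarith
  · intro hps
    have hx := hps.dotProduct_mulVec_nonneg ![0, 1]
    have hval : (star ![(0:ℂ), 1]) ⬝ᵥ ((ρ (2*Real.pi)) *ᵥ ![(0:ℂ), 1])
        = ((((1+kappa14)/2 : ℝ)) : ℂ) := by
      rw [heq]
      simp [Matrix.mulVec, dotProduct, Fin.sum_univ_two, sigmaZ,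
        Matrix.one_apply]
      push_cast
      ring
    rw [hval] at hx
    rw [Complex.zero_le_real] at hx
    linarith
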